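/- arXiv:2502.15453 — 5 statements merged into one kernel-verified Lean document; each statement's English description precedes it below -/
import Mathlib

section
/- Let T be a finite transmission irregular tree and let v be a vertex of T. Then the connected components of the graph T − v (obtained by deleting v and its incident edges) have pairwise distinct numbers of vertices. -/
open SimpleGraph

section Aux

variable {V : Type*} {T : SimpleGraph V} {v : V}

private lemma reach_induce_aux {a b : V} (p : T.Walk a b) (hp : v ∉ p.support)
    (ha : a ∈ ({v}ᶜ : Set V)) (hb : b ∈ ({v}ᶜ : Set V)) :
    (T.induce ({v}ᶜ : Set V)).Reachable ⟨a, ha⟩ ⟨b, hb⟩ := by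
  induction p with
  | nil => exact Reachable.refl _
  | @cons a c b h q ih =>
    have hc : c ∈ ({v}ᶜ : Set V) := by
      intro hcv
      apply hp
      simp only [Set.mem_singleton_iff] at hcv
      subst hcv
      simp [SimpleGraph.Walk.support_cons, SimpleGraph.Walk.start_mem_support]
    have hq : v ∉ q.support := fun hv => hp (by simp [SimpleGraph.Walk.support_cons, hv])
    have hadj : (T.induce ({v}ᶜ : Set V)).Adj ⟨a, ha⟩ ⟨c, hc⟩ := h
    exact (hadj.reachable).trans (ih hq hc hb)

/-- The inclusion hom from the induced subgraph. -/
private def inclHom (T : SimpleGraph V) (s : Set V) : T.induce s →g T :=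
  ⟨Subtype.val, fun h => h⟩

private lemma exists_walk_avoid {a b : V} (ha : a ∈ ({v}ᶜ : Set V)) (hb : b ∈ ({v}ᶜ : Set V))
    (hr : (T.induce ({v}ᶜ : Set V)).Reachable ⟨a, ha⟩ ⟨b, hb⟩) :
    ∃ p : T.Walk a b, v ∉ p.support := by
  obtain ⟨q⟩ := hr
  refine ⟨q.map (inclHom T ({v}ᶜ : Set V)), ?_⟩
  erw [SimpleGraph.Walk.support_map]
  rintro hmem
  obtain ⟨z, hz, hzv⟩ := List.mem_map.mp hmem
  exact z.2 hzv

/-- Two neighbors of `v` in the same component of `T - v` coincide. -/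
private lemma nbr_unique (hT : T.IsTree) {u u' : V}
    (h : T.Adj v u) (h' : T.Adj v u')
    (hu : u ∈ ({v}ᶜ : Set V)) (hu' : u' ∈ ({v}ᶜ : Set V))
    (hc : (T.induce ({v}ᶜ : Set V)).connectedComponentMk ⟨u, hu⟩ =
      (T.induce ({v}ᶜ : Set V)).connectedComponentMk ⟨u', hu'⟩) : u = u' := by
  classical
  by_contra hne
  obtain ⟨q, hq⟩ := exists_walk_avoid hu hu' (ConnectedComponent.exact hc)
  have hvp : v ∉ q.toPath.1.support := fun hv => hq (q.support_toPath_subset hv)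
  have hp2 : (SimpleGraph.Walk.cons h.symm (SimpleGraph.Walk.cons h' SimpleGraph.Walk.nil)).IsPath := by
    simp [SimpleGraph.Walk.isPath_def, h.ne', h'.ne, hne]
  have := hT.IsAcyclic.path_unique q.toPath ⟨_, hp2⟩
  apply hvp
  rw [this]
  simp

end Aux

/-- If `T` is a finite transmission irregular tree and `v` is a vertex of `T`,
then the connected components of `T - v` have pairwise distinct numbers of vertices. -/
theorem components_distinct_orders_of_TI {V : Type*} [Fintype V]
    (T : SimpleGraph V) (hT : T.IsTree)
    (hTI : ∀ x y : V, (∑ w, T.dist x w) = (∑ w, T.dist y w) → x = y)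
    (v : V)
    (c₁ c₂ : (T.induce ({v}ᶜ : Set V)).ConnectedComponent) (hne : c₁ ≠ c₂) :
    c₁.supp.ncard ≠ c₂.supp.ncard := by
  classical
  have hconn : T.Connected := hT.isConnected
  -- every component contains a neighbor of v
  have exists_nbr : ∀ c : (T.induce ({v}ᶜ : Set V)).ConnectedComponent,
      ∃ u, ∃ hu : u ∈ ({v}ᶜ : Set V), T.Adj v u ∧ (T.induce ({v}ᶜ : Set V)).connectedComponentMk ⟨u, hu⟩ = c := by
    intro c
    obtain ⟨⟨w, hw⟩, rfl⟩ := c.exists_rep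
    obtain ⟨p, hp, -⟩ := hconn.exists_path_of_dist v w
    cases p with
    | nil => exact absurd rfl hw
    | @cons _ u _ h q =>
      rw [SimpleGraph.Walk.cons_isPath_iff] at hp
      have hu : u ∈ ({v}ᶜ : Set V) := fun huv => by
        simp only [Set.mem_singleton_iff] at huv; exact h.ne huv.symm
      exact ⟨u, hu, h, ConnectedComponent.sound (reach_induce_aux q hp.2 hu hw)⟩
  -- distance formula for a neighbor u of v
  have dist_formula : ∀ (u : V) (hu : u ∈ ({v}ᶜ : Set V)), T.Adj v u → ∀ w : V,
      T.dist u w + (if w ∈ (Subtype.val '' ((T.induce ({v}ᶜ : Set V)).connectedComponentMk ⟨u, hu⟩).supp) then 2 else 0)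
        = T.dist v w + 1 := by
    intro u hu h w
    by_cases hw : w ∈ (Subtype.val '' ((T.induce ({v}ᶜ : Set V)).connectedComponentMk ⟨u, hu⟩).supp)
    · -- same component: dist v w = dist u w + 1
      obtain ⟨⟨w', hw'⟩, hwsupp, rfl⟩ := hw
      rw [ConnectedComponent.mem_supp_iff] at hwsupp
      obtain ⟨p, hp, hlen⟩ := hconn.exists_path_of_dist v w'
      have hvw : v ≠ w' := fun hvw => hw' (by simp [← hvw])
      cases p with
      | nil => exact absurd rfl hvw
      | @cons _ u' _ h' q =>
        rw [SimpleGraph.Walk.cons_isPath_iff] at hp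
        have hu' : u' ∈ ({v}ᶜ : Set V) := fun huv => by
          simp only [Set.mem_singleton_iff] at huv; exact h'.ne huv.symm
        have hcomp : (T.induce ({v}ᶜ : Set V)).connectedComponentMk ⟨u', hu'⟩ = (T.induce ({v}ᶜ : Set V)).connectedComponentMk ⟨u, hu⟩ := by
          rw [ConnectedComponent.sound (reach_induce_aux q hp.2 hu' hw'), hwsupp]
        have huu : u' = u := nbr_unique hT h' h hu' hu hcomp
        subst huu
        have h1 : T.dist u' w' ≤ q.length := SimpleGraph.dist_le q
        have h2 : T.dist v w' ≤ T.dist v u' + T.dist u' w' := hconn.dist_triangle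
        have h3 : T.dist v u' = 1 := SimpleGraph.dist_eq_one_iff_adj.mpr h'
        have h4 : q.length + 1 = T.dist v w' := by
          simpa [SimpleGraph.Walk.length_cons] using hlen
        have hifpos : (if w' ∈ (Subtype.val '' ((T.induce ({v}ᶜ : Set V)).connectedComponentMk ⟨u', hu⟩).supp) then 2 else 0) = 2 := by
          rw [if_pos]
          exact ⟨⟨w', hw'⟩, by rw [ConnectedComponent.mem_supp_iff, hwsupp], rfl⟩
        rw [hifpos]
        show T.dist u' w' + 2 = T.dist v w' + 1
        omega
    · -- w = v or different component: dist u w = dist v w + 1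
      rw [if_neg hw]
      by_cases hwv : w = v
      · rw [hwv]
        have h1 : T.dist u v = 1 := by
          rw [SimpleGraph.dist_comm]; exact SimpleGraph.dist_eq_one_iff_adj.mpr h
        simp [h1]
      · -- different component
        obtain ⟨p, hp, hlen⟩ := hconn.exists_path_of_dist u w
        by_cases hv : v ∈ p.support
        · have hsplit : (p.takeUntil v hv).length + (p.dropUntil v hv).length = p.length := by
            rw [← SimpleGraph.Walk.length_append, SimpleGraph.Walk.take_spec]
          have h1 : T.dist u v ≤ (p.takeUntil v hv).length := SimpleGraph.dist_le _
          have h2 : T.dist v w ≤ (p.dropUntil v hv).length := SimpleGraph.dist_le _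
          have h3 : T.dist u v = 1 := by
            rw [SimpleGraph.dist_comm]; exact SimpleGraph.dist_eq_one_iff_adj.mpr h
          have h4 : T.dist u w ≤ 1 + T.dist v w := by
            calc T.dist u w ≤ T.dist u v + T.dist v w := hconn.dist_triangle
            _ = 1 + T.dist v w := by rw [h3]
          omega
        · exfalso
          apply hw
          have hwmem : w ∈ ({v}ᶜ : Set V) := hwv
          exact ⟨⟨w, hwmem⟩, by
            rw [ConnectedComponent.mem_supp_iff]
            exact (ConnectedComponent.sound (reach_induce_aux p hv hu hwmem)).symm, rfl⟩
  -- sum formula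
  have key : ∀ (u : V) (hu : u ∈ ({v}ᶜ : Set V)), T.Adj v u →
      (∑ w, T.dist u w) + 2 * ((T.induce ({v}ᶜ : Set V)).connectedComponentMk ⟨u, hu⟩).supp.ncard
        = (∑ w, T.dist v w) + Fintype.card V := by
    intro u hu h
    have hsum : (∑ w : V, (T.dist u w +
        (if w ∈ (Subtype.val '' ((T.induce ({v}ᶜ : Set V)).connectedComponentMk ⟨u, hu⟩).supp) then 2 else 0)))
        = ∑ w : V, (T.dist v w + 1) :=
      Finset.sum_congr rfl (fun w _ => dist_formula u hu h w)
    rw [Finset.sum_add_distrib] at hsum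
    have hite : (∑ w : V, if w ∈ (Subtype.val '' ((T.induce ({v}ᶜ : Set V)).connectedComponentMk ⟨u, hu⟩).supp) then 2 else 0)
        = 2 * ((T.induce ({v}ᶜ : Set V)).connectedComponentMk ⟨u, hu⟩).supp.ncard := by
      rw [Finset.sum_ite, Finset.sum_const, Finset.sum_const_zero, add_zero, smul_eq_mul, mul_comm]
      congr 1
      rw [← Set.ncard_image_of_injective _ Subtype.val_injective]
      rw [Set.ncard_eq_toFinset_card']
      congr 1
      ext w
      simp
    rw [hite] at hsum
    simpa [Finset.sum_add_distrib, Finset.card_univ] using hsum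
  -- conclude
  intro hcard
  obtain ⟨u₁, hu₁, hadj₁, hc₁⟩ := exists_nbr c₁
  obtain ⟨u₂, hu₂, hadj₂, hc₂⟩ := exists_nbr c₂
  have k₁ := key u₁ hu₁ hadj₁
  have k₂ := key u₂ hu₂ hadj₂
  rw [hc₁] at k₁
  rw [hc₂] at k₂
  rw [hcard] at k₁
  have : (∑ w, T.dist u₁ w) = (∑ w, T.dist u₂ w) := by omega
  have huu : u₁ = u₂ := hTI _ _ this
  subst huu
  exact hne (hc₁.symm.trans hc₂)
end

section
/- Let T be a finite transmission irregular tree of order n ≥ 2 and let v be a vertex of T whose transmission is minimum among all vertices of T. Then the degree of v in T is at least 3. -/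
set_option linter.unusedSectionVars false

open scoped Classical
open SimpleGraph Finset

section Aux

variable {V : Type*} [Fintype V]

/-- In a tree, every path has length equal to the distance between its endpoints. -/
lemma tree_path_length_eq_dist (T : SimpleGraph V) (hT : T.IsTree) {x y : V}
    (p : T.Walk x y) (hp : p.IsPath) : p.length = T.dist x y := by
  obtain ⟨w, hw⟩ := hT.isConnected.exists_walk_length_eq_dist x y
  have huniq : (⟨p, hp⟩ : T.Path x y) = ⟨w.bypass, w.bypass_isPath⟩ :=
    hT.IsAcyclic.path_unique _ _
  have hlen : p.length = w.bypass.length := by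
    have := congrArg (fun q : T.Path x y => q.1.length) huniq
    simpa using this
  have h1 : p.length ≤ T.dist x y := by
    rw [hlen, ← hw]; exact w.length_bypass_le
  exact le_antisymm h1 (SimpleGraph.dist_le p)

/-- A path between `x` and `y` through `u` splits the distance. -/
lemma tree_dist_split (T : SimpleGraph V) (hT : T.IsTree) {x y u : V}
    (p : T.Walk x y) (hp : p.IsPath) (hu : u ∈ p.support) :
    T.dist x u + T.dist u y = T.dist x y := by
  have h1 := tree_path_length_eq_dist T hT _ (hp.takeUntil hu)
  have h2 := tree_path_length_eq_dist T hT _ (hp.dropUntil hu)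
  have h3 := tree_path_length_eq_dist T hT p hp
  have h4 := congrArg SimpleGraph.Walk.length (p.take_spec hu)
  rw [SimpleGraph.Walk.length_append] at h4
  omega

/-- The unique path from x to y, as a path of correct length. -/
lemma tree_exists_path (T : SimpleGraph V) (hT : T.IsTree) (x y : V) :
    ∃ p : T.Walk x y, p.IsPath ∧ p.length = T.dist x y := by
  obtain ⟨w, _⟩ := hT.isConnected.exists_walk_length_eq_dist x y
  exact ⟨w.bypass, w.bypass_isPath, tree_path_length_eq_dist T hT _ w.bypass_isPath⟩

/-- Dichotomy: a neighbour of `v` is either one closer or one farther from `x`. -/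
lemma tree_dist_dichotomy (T : SimpleGraph V) (hT : T.IsTree) {v a : V}
    (e : T.Adj v a) (x : V) :
    T.dist x v = T.dist x a + 1 ∨ T.dist x a = T.dist x v + 1 := by
  obtain ⟨p, hp, hplen⟩ := tree_exists_path T hT x v
  by_cases ha : a ∈ p.support
  · left
    have hsplit := tree_dist_split T hT p hp ha
    have h1 : T.dist a v = 1 := SimpleGraph.dist_eq_one_iff_adj.mpr e.symm
    omega
  · right
    have hq : (p.concat e).IsPath := by
      rw [← SimpleGraph.Walk.isPath_reverse_iff, SimpleGraph.Walk.reverse_concat]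
      rw [SimpleGraph.Walk.cons_isPath_iff]
      refine ⟨hp.reverse, ?_⟩
      simpa [SimpleGraph.Walk.support_reverse] using ha
    have := tree_path_length_eq_dist T hT _ hq
    rw [SimpleGraph.Walk.length_concat] at this
    omega

/-- Uniqueness of the closer neighbour. -/
lemma tree_closer_unique (T : SimpleGraph V) (hT : T.IsTree) {v a b : V}
    (ea : T.Adj v a) (eb : T.Adj v b) (x : V)
    (ha : T.dist x v = T.dist x a + 1) (hb : T.dist x v = T.dist x b + 1) :
    a = b := by
  have key : ∀ c : V, (ec : T.Adj v c) → T.dist x v = T.dist x c + 1 →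
      ∃ (q : T.Walk x v), q.IsPath ∧ q.reverse.getVert 1 = c := by
    intro c ec hc
    obtain ⟨p, hp, hplen⟩ := tree_exists_path T hT x c
    have hvs : v ∉ p.support := by
      intro hvmem
      have hsplit := tree_dist_split T hT p hp hvmem
      have h1 : T.dist v c = 1 := SimpleGraph.dist_eq_one_iff_adj.mpr ec
      omega
    refine ⟨p.concat ec.symm, ?_, ?_⟩
    · rw [← SimpleGraph.Walk.isPath_reverse_iff, SimpleGraph.Walk.reverse_concat]
      rw [SimpleGraph.Walk.cons_isPath_iff]
      refine ⟨hp.reverse, ?_⟩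
      simpa [SimpleGraph.Walk.support_reverse] using hvs
    · rw [SimpleGraph.Walk.reverse_concat]
      simp [SimpleGraph.Walk.getVert_cons_succ]
  obtain ⟨qa, hqa, hga⟩ := key a ea ha
  obtain ⟨qb, hqb, hgb⟩ := key b eb hb
  have : (⟨qa, hqa⟩ : T.Path x v) = ⟨qb, hqb⟩ := hT.IsAcyclic.path_unique _ _
  have hq : qa = qb := congrArg Subtype.val this
  rw [← hga, ← hgb, hq]

/-- Existence of a closer neighbour for every `x ≠ v`. -/
lemma tree_closer_exists (T : SimpleGraph V) (hT : T.IsTree) {v x : V} (hx : x ≠ v) :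
    ∃ a : V, T.Adj v a ∧ T.dist x v = T.dist x a + 1 := by
  obtain ⟨p, hp, hplen⟩ := tree_exists_path T hT x v
  obtain ⟨a, hadj, q, hq⟩ := SimpleGraph.Walk.exists_eq_cons_of_ne (Ne.symm hx) p.reverse
  have hqpath : q.IsPath := by
    have := hp.reverse
    rw [hq, SimpleGraph.Walk.cons_isPath_iff] at this
    exact this.1
  have hqlen : q.length = T.dist a x := tree_path_length_eq_dist T hT q hqpath
  have hlen : p.reverse.length = q.length + 1 := by rw [hq]; simp
  rw [SimpleGraph.Walk.length_reverse] at hlen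
  have hcomm : T.dist a x = T.dist x a := T.dist_comm
  exact ⟨a, hadj, by omega⟩

end Aux

/-- If `T` is a finite transmission irregular tree of order `n ≥ 2` and
`v` is a vertex of minimum transmission, then the degree of `v` in `T` is at least `3`. -/
theorem three_le_degree_of_min_transmission {V : Type*} [Fintype V]
    (T : SimpleGraph V) (hT : T.IsTree) (hn : 2 ≤ Fintype.card V)
    (hTI : ∀ x y : V, (∑ w, T.dist x w) = (∑ w, T.dist y w) → x = y)
    (v : V) (hv : ∀ x : V, (∑ w, T.dist v w) ≤ ∑ w, T.dist x w) :
    3 ≤ T.degree v := by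
  classical
  set n := Fintype.card V with hncard
  -- the "branch" of a neighbour a
  set S : V → Finset V := fun a => univ.filter (fun x => T.dist x v = T.dist x a + 1) with hS
  -- transmissions, summed in the first variable
  have hTrflip : ∀ a : V, (∑ w, T.dist a w) = ∑ x, T.dist x a := by
    intro a; exact Finset.sum_congr rfl fun x _ => T.dist_comm
  -- strict minimality at neighbours
  have hstrict : ∀ a : V, T.Adj v a → (∑ x, T.dist x v) < ∑ x, T.dist x a := by
    intro a e
    have hle : (∑ w, T.dist v w) ≤ ∑ w, T.dist a w := hv a
    have hne : (∑ w, T.dist v w) ≠ ∑ w, T.dist a w := fun h => e.ne (hTI v a h)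
    rw [hTrflip v, hTrflip a] at hle hne
    omega
  -- the difference formula
  have hdiff : ∀ a : V, T.Adj v a →
      (∑ x, (T.dist x a : ℤ)) - (∑ x, (T.dist x v : ℤ)) = (n : ℤ) - 2 * (S a).card := by
    intro a e
    have hterm : ∀ x : V, (T.dist x a : ℤ) - (T.dist x v : ℤ)
        = if T.dist x v = T.dist x a + 1 then (-1 : ℤ) else 1 := by
      intro x
      rcases tree_dist_dichotomy T hT e x with h | h <;> split_ifs <;> omega
    have hsum : (∑ x, (T.dist x a : ℤ)) - (∑ x, (T.dist x v : ℤ))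
        = ∑ x : V, ((T.dist x a : ℤ) - (T.dist x v : ℤ)) := by
      rw [Finset.sum_sub_distrib]
    rw [hsum]
    calc (∑ x : V, ((T.dist x a : ℤ) - (T.dist x v : ℤ)))
        = ∑ x : V, (if T.dist x v = T.dist x a + 1 then (-1 : ℤ) else 1) :=
          Finset.sum_congr rfl fun x _ => hterm x
      _ = (S a).card • (-1 : ℤ) + (univ.filter fun x => ¬ (T.dist x v = T.dist x a + 1)).card • (1 : ℤ) := by
          rw [Finset.sum_ite, Finset.sum_const, Finset.sum_const]
      _ = (n : ℤ) - 2 * (S a).card := by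
          have hcards : (S a).card + (univ.filter fun x => ¬ (T.dist x v = T.dist x a + 1)).card = n := by
            have h := Finset.card_filter_add_card_filter_not
              (s := (univ : Finset V)) (p := fun x => T.dist x v = T.dist x a + 1)
            rw [Finset.card_univ] at h
            rw [hS, hncard]
            convert h using 3
          simp only [nsmul_eq_mul, mul_neg, mul_one]
          omega
  -- hence each branch is small
  have hsmall : ∀ a : V, T.Adj v a → 2 * (S a).card + 1 ≤ n := by
    intro a e
    have h1 := hdiff a e
    have h2 := hstrict a e
    have h3 : ((∑ x, T.dist x v : ℕ) : ℤ) < ((∑ x, T.dist x a : ℕ) : ℤ) := by exact_mod_cast h2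
    push_cast at h1 h3
    omega
  -- the branches partition `univ \ {v}`
  set N := T.neighborFinset v with hN
  have hdisj : ∀ a ∈ N, ∀ b ∈ N, a ≠ b → Disjoint (S a) (S b) := by
    intro a ha b hb hab
    rw [Finset.disjoint_left]
    intro x hxa hxb
    rw [hS] at hxa hxb
    simp only [Finset.mem_filter] at hxa hxb
    exact hab (tree_closer_unique T hT ((T.mem_neighborFinset v _).mp ha)
      ((T.mem_neighborFinset v _).mp hb) x hxa.2 hxb.2)
  have hcover : N.biUnion S = univ.erase v := by
    ext x
    simp only [Finset.mem_biUnion, Finset.mem_erase, Finset.mem_univ, and_true]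
    constructor
    · rintro ⟨a, ha, hx⟩
      rw [hS] at hx
      simp only [Finset.mem_filter] at hx
      intro hxv
      subst hxv
      have : T.dist x x = 0 := T.dist_self
      omega
    · intro hx
      obtain ⟨a, hadj, hda⟩ := tree_closer_exists T hT hx
      exact ⟨a, (T.mem_neighborFinset v _).mpr hadj, by rw [hS]; simp [hda]⟩
  have hsumcard : ∑ a ∈ N, (S a).card = n - 1 := by
    rw [← Finset.card_biUnion hdisj, hcover, Finset.card_erase_of_mem (Finset.mem_univ v),
      Finset.card_univ]
  -- now suppose the degree is at most 2
  by_contra hdeg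
  push_neg at hdeg
  have hNcard : N.card ≤ 2 := by
    rw [hN]; have := T.card_neighborFinset_eq_degree v; omega
  interval_cases hk : N.card
  · -- degree 0
    rw [Finset.card_eq_zero] at hk
    rw [hk] at hsumcard
    simp at hsumcard
    omega
  · -- degree 1
    obtain ⟨a, hk⟩ := Finset.card_eq_one.mp hk
    have ha : a ∈ N := by rw [hk]; simp
    have := hsmall a ((T.mem_neighborFinset v _).mp ha)
    rw [hk, Finset.sum_singleton] at hsumcard
    omega
  · -- degree 2
    obtain ⟨a, b, hab, hk⟩ := Finset.card_eq_two.mp hk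
    have ha : a ∈ N := by rw [hk]; simp
    have hb : b ∈ N := by rw [hk]; simp
    have hea := (T.mem_neighborFinset v _).mp ha
    have heb := (T.mem_neighborFinset v _).mp hb
    rw [hk, Finset.sum_pair hab] at hsumcard
    have h1 := hsmall a hea
    have h2 := hsmall b heb
    have hScard : (S a).card = (S b).card := by omega
    have hda := hdiff a hea
    have hdb := hdiff b heb
    have : (∑ x, (T.dist x a : ℤ)) = ∑ x, (T.dist x b : ℤ) := by
      rw [hScard] at hda; omega
    have hnat : (∑ x, T.dist x a) = ∑ x, T.dist x b := by
      have : ((∑ x, T.dist x a : ℕ) : ℤ) = ((∑ x, T.dist x b : ℕ) : ℤ) := by push_cast; exact this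
      exact_mod_cast this
    rw [← hTrflip a, ← hTrflip b] at hnat
    exact hab (hTI a b hnat)
end

section
/- Let T be a finite connected simple graph, v a vertex of T, and suppose the transmission of v is minimum among all vertices of T. Then for every vertex u adjacent to v, n_T(u, v) ≤ n_T(v, u), where n_T(x, y) denotes the number of vertices strictly closer to x than to y. -/
/-- If `T` is a finite connected simple graph and `v` has minimum
transmission, then for every vertex `u` adjacent to `v` we have `n_T(u, v) ≤ n_T(v, u)`,
where `n_T(x, y)` is the number of vertices strictly closer to `x` than to `y`. -/
theorem closer_count_le_of_min_transmission {V : Type*} [Fintype V]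
    (T : SimpleGraph V) (hT : T.Connected)
    (v : V) (hv : ∀ x : V, (∑ w, T.dist v w) ≤ ∑ w, T.dist x w)
    (u : V) (hu : T.Adj u v) :
    {w : V | T.dist w u < T.dist w v}.ncard ≤ {w : V | T.dist w v < T.dist w u}.ncard := by
  classical
  have hduv : T.dist u v = 1 := SimpleGraph.dist_eq_one_iff_adj.mpr hu
  have hdvu : T.dist v u = 1 := SimpleGraph.dist_eq_one_iff_adj.mpr hu.symm
  -- each distance differs by at most 1
  have hA : ∀ w, T.dist w u < T.dist w v → T.dist w v = T.dist w u + 1 := by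
    intro w h
    have := hT.dist_triangle (u := w) (v := u) (w := v)
    omega
  have hB : ∀ w, T.dist w v < T.dist w u → T.dist w u = T.dist w v + 1 := by
    intro w h
    have := hT.dist_triangle (u := w) (v := v) (w := u)
    omega
  set A : Finset V := Finset.univ.filter (fun w => T.dist w u < T.dist w v) with hAdef
  set B : Finset V := Finset.univ.filter (fun w => T.dist w v < T.dist w u) with hBdef
  have hcardA : {w : V | T.dist w u < T.dist w v}.ncard = A.card := by
    rw [hAdef, ← Set.ncard_coe_finset]; congr 1; ext w; simp
  have hcardB : {w : V | T.dist w v < T.dist w u}.ncard = B.card := by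
    rw [hBdef, ← Set.ncard_coe_finset]; congr 1; ext w; simp
  rw [hcardA, hcardB]
  -- transmission inequality
  have hkey : (∑ w, T.dist w v) ≤ ∑ w, T.dist w u := by
    have := hv u
    simpa [SimpleGraph.dist_comm] using this
  -- split sums
  have hsplit : ∀ f : V → ℕ, ∑ w, f w = ∑ w ∈ A, f w + ∑ w ∈ Aᶜ, f w := by
    intro f
    rw [Finset.sum_add_sum_compl]
  have hBsub : B ⊆ Aᶜ := by
    intro w hw
    simp only [hAdef, hBdef, Finset.mem_filter, Finset.mem_compl, Finset.mem_univ,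
      true_and] at *
    omega
  have hsplit2 : ∀ f : V → ℕ, ∑ w ∈ Aᶜ, f w = ∑ w ∈ B, f w + ∑ w ∈ Aᶜ \ B, f w := by
    intro f
    rw [← Finset.sum_union (Finset.disjoint_sdiff), Finset.union_sdiff_of_subset hBsub]
  have hAv : ∑ w ∈ A, T.dist w v = ∑ w ∈ A, T.dist w u + A.card := by
    rw [Finset.card_eq_sum_ones, ← Finset.sum_add_distrib]
    apply Finset.sum_congr rfl
    intro w hw
    simp only [hAdef, Finset.mem_filter] at hw
    exact hA w hw.2
  have hBu : ∑ w ∈ B, T.dist w u = ∑ w ∈ B, T.dist w v + B.card := by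
    rw [Finset.card_eq_sum_ones, ← Finset.sum_add_distrib]
    apply Finset.sum_congr rfl
    intro w hw
    simp only [hBdef, Finset.mem_filter] at hw
    exact hB w hw.2
  have hC : ∑ w ∈ Aᶜ \ B, T.dist w u = ∑ w ∈ Aᶜ \ B, T.dist w v := by
    apply Finset.sum_congr rfl
    intro w hw
    simp only [hAdef, hBdef, Finset.mem_sdiff, Finset.mem_compl, Finset.mem_filter,
      Finset.mem_univ, true_and, not_lt] at hw
    omega
  have e1 := hsplit (fun w => T.dist w v)
  have e2 := hsplit (fun w => T.dist w u)
  have e3 := hsplit2 (fun w => T.dist w v)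
  have e4 := hsplit2 (fun w => T.dist w u)
  omega
end

section
/- Let T be a finite rooted tree with root r, let v be a vertex of T and T_v the subtree of T rooted at v. If u₁ and u₂ are two distinct vertices of T_v with d_T(v, u₁) = d_T(v, u₂) and Tr_T(u₁) ≠ Tr_T(u₂), then Tr_{T_v}(u₁) ≠ Tr_{T_v}(u₂), where Tr_S denotes transmission computed within the tree S. -/
open scoped Classical

/-- In a rooted tree `T` with root `r`, the subtree rooted at `v` consists of `v` together
with all vertices `w` such that `v` lies on the unique path from `r` to `w`. -/
def SimpleGraph.subtreeSet {V : Type*} (T : SimpleGraph V) (r v : V) : Set V :=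
  {w | ∀ p : T.Path r w, v ∈ p.1.support}

/-- The transmission of a vertex `u` of the subtree of `T` rooted at `v` (with respect to
root `r`), computed within the subtree, i.e. within the induced subgraph on the subtree. -/
noncomputable def SimpleGraph.subtreeTr {V : Type*} [Fintype V] (T : SimpleGraph V)
    (r v u : V) (hu : u ∈ T.subtreeSet r v) : ℕ :=
  ∑ w : T.subtreeSet r v, (T.induce (T.subtreeSet r v)).dist ⟨u, hu⟩ w

namespace SimpleGraph

variable {V : Type*} {T : SimpleGraph V}

/-- In a tree, every path between two vertices has length equal to the distance. -/
lemma aux_tree_length_eq_dist (hT : T.IsTree) {u w : V} {p : T.Walk u w}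
    (hp : p.IsPath) : p.length = T.dist u w := by
  obtain ⟨q, hq, hlen⟩ := (hT.isConnected.preconnected u w).exists_path_of_dist
  rw [(hT.existsUnique_path u w).unique hp hq, hlen]

/-- In a tree, if `b` lies on a path from `a` to `c` then distances add up. -/
lemma aux_tree_dist_add (hT : T.IsTree) {a b c : V} {p : T.Walk a c}
    (hp : p.IsPath) (hb : b ∈ p.support) : T.dist a c = T.dist a b + T.dist b c := by
  classical
  rw [← aux_tree_length_eq_dist hT hp, ← aux_tree_length_eq_dist hT (hp.takeUntil hb),
    ← aux_tree_length_eq_dist hT (hp.dropUntil hb), ← Walk.length_append, Walk.take_spec]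

/-- Membership in the subtree set, tested against any particular path from the root. -/
lemma aux_mem_subtreeSet_iff (hT : T.IsTree) {r v w : V} {p : T.Walk r w}
    (hp : p.IsPath) : w ∈ T.subtreeSet r v ↔ v ∈ p.support := by
  constructor
  · intro h; exact h ⟨p, hp⟩
  · intro h q
    have := (hT.existsUnique_path r w).unique q.2 hp
    rw [this]; exact h

/-- The support of a path from `v` to an element of the subtree set lies in the
subtree set. -/
lemma aux_support_subset_subtreeSet (hT : T.IsTree) {r v w : V}
    (hw : w ∈ T.subtreeSet r v) {p : T.Walk v w} (hp : p.IsPath) :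
    ∀ x ∈ p.support, x ∈ T.subtreeSet r v := by
  classical
  intro x hx
  obtain ⟨P, hP, -⟩ := (hT.isConnected.preconnected r w).exists_path_of_dist
  have hv : v ∈ P.support := (aux_mem_subtreeSet_iff hT hP).1 hw
  have hdrop : p = P.dropUntil v hv :=
    (hT.existsUnique_path v w).unique hp (hP.dropUntil hv)
  rw [hdrop] at hx
  set Q : T.Walk r x := (P.takeUntil v hv).append ((P.dropUntil v hv).takeUntil x hx)
    with hQdef
  have hQP : Q.append ((P.dropUntil v hv).dropUntil x hx) = P := by
    rw [hQdef, ← Walk.append_assoc, Walk.take_spec, Walk.take_spec]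
  have hQ : Q.IsPath := Walk.IsPath.of_append_left (by rw [hQP]; exact hP)
  have hvQ : v ∈ Q.support := by
    rw [hQdef, Walk.mem_support_append_iff]
    exact Or.inl (Walk.end_mem_support _)
  exact (aux_mem_subtreeSet_iff hT hQ).2 hvQ

/-- A path between two vertices of the subtree set stays inside the subtree set. -/
lemma aux_path_support_subset (hT : T.IsTree) {r v u w : V}
    (hu : u ∈ T.subtreeSet r v) (hw : w ∈ T.subtreeSet r v) {p : T.Walk u w}
    (hp : p.IsPath) : ∀ x ∈ p.support, x ∈ T.subtreeSet r v := by
  obtain ⟨q1, hq1, -⟩ := (hT.isConnected.preconnected v u).exists_path_of_dist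
  obtain ⟨q2, hq2, -⟩ := (hT.isConnected.preconnected v w).exists_path_of_dist
  have hbp : p = (q1.reverse.append q2).bypass :=
    (hT.existsUnique_path u w).unique hp (Walk.bypass_isPath _)
  intro x hx
  rw [hbp] at hx
  have hx' := Walk.support_bypass_subset _ hx
  rw [Walk.mem_support_append_iff] at hx'
  rcases hx' with hx' | hx'
  · rw [Walk.support_reverse, List.mem_reverse] at hx'
    exact aux_support_subset_subtreeSet hT hu hq1 x hx'
  · exact aux_support_subset_subtreeSet hT hw hq2 x hx'

/-- Distance from a vertex in the subtree to a vertex outside splits through `v`. -/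
lemma aux_dist_eq_add_of_not_mem (hT : T.IsTree) {r v u w : V}
    (hu : u ∈ T.subtreeSet r v) (hw : w ∉ T.subtreeSet r v) :
    T.dist u w = T.dist u v + T.dist v w := by
  obtain ⟨q, hq, -⟩ := (hT.isConnected.preconnected u w).exists_path_of_dist
  have hv : v ∈ q.support := by
    by_contra hvq
    obtain ⟨p0, hp0, -⟩ := (hT.isConnected.preconnected r w).exists_path_of_dist
    have hv0 : v ∉ p0.support := fun h => hw ((aux_mem_subtreeSet_iff hT hp0).2 h)
    have hvW : v ∉ (p0.append q.reverse).support := by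
      rw [Walk.mem_support_append_iff]
      push_neg
      exact ⟨hv0, by rwa [Walk.support_reverse, List.mem_reverse]⟩
    exact hvW (Walk.support_bypass_subset _
      ((aux_mem_subtreeSet_iff hT (Walk.bypass_isPath (p0.append q.reverse))).1 hu))
  exact aux_tree_dist_add hT hq hv

/-- A walk whose support lies in `S` can be transferred to the induced graph. -/
lemma aux_exists_induced_walk {S : Set V} :
    ∀ {u w : V} (p : T.Walk u w), (∀ x ∈ p.support, x ∈ S) →
      ∀ (hu : u ∈ S) (hw : w ∈ S),
      ∃ q : (T.induce S).Walk ⟨u, hu⟩ ⟨w, hw⟩, q.length = p.length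
  | _, _, Walk.nil, _, _, _ => ⟨Walk.nil, rfl⟩
  | u, w, @Walk.cons _ _ _ b _ h p, hs, hu, hw => by
    have hb : b ∈ S := hs _ (by simp)
    obtain ⟨q, hq⟩ := aux_exists_induced_walk p (fun x hx => hs x (by simp [hx])) hb hw
    exact ⟨Walk.cons (by simpa using h) q, by simp [hq]⟩

/-- Distances within the induced subtree agree with distances in the tree. -/
lemma aux_induced_dist_eq (hT : T.IsTree) {r v u w : V}
    (hu : u ∈ T.subtreeSet r v) (hw : w ∈ T.subtreeSet r v) :
    (T.induce (T.subtreeSet r v)).dist ⟨u, hu⟩ ⟨w, hw⟩ = T.dist u w := by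
  obtain ⟨p, hp, hlen⟩ := (hT.isConnected.preconnected u w).exists_path_of_dist
  obtain ⟨q, hq⟩ := aux_exists_induced_walk p (aux_path_support_subset hT hu hw hp) hu hw
  apply le_antisymm
  · calc (T.induce (T.subtreeSet r v)).dist ⟨u, hu⟩ ⟨w, hw⟩ ≤ q.length := dist_le q
      _ = T.dist u w := by rw [hq, hlen]
  · obtain ⟨q', hq', hlen'⟩ := q.reachable.exists_path_of_dist
    calc T.dist u w ≤ (q'.map (Embedding.induce (T.subtreeSet r v)).toHom).length :=
          dist_le _
      _ = (T.induce (T.subtreeSet r v)).dist ⟨u, hu⟩ ⟨w, hw⟩ := by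
          rw [Walk.length_map, hlen']

end SimpleGraph

/-- Let `T` be a finite rooted tree with root `r`, `v` a vertex and `T_v`
the subtree rooted at `v`.  If `u₁ ≠ u₂` are vertices of `T_v` with
`d_T(v, u₁) = d_T(v, u₂)` and `Tr_T(u₁) ≠ Tr_T(u₂)`, then `Tr_{T_v}(u₁) ≠ Tr_{T_v}(u₂)`. -/
theorem subtree_transmissions_ne {V : Type*} [Fintype V]
    (T : SimpleGraph V) (hT : T.IsTree) (r v : V) (u₁ u₂ : V)
    (h₁ : u₁ ∈ T.subtreeSet r v) (h₂ : u₂ ∈ T.subtreeSet r v) (hne : u₁ ≠ u₂)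
    (hd : T.dist v u₁ = T.dist v u₂)
    (htr : (∑ w, T.dist u₁ w) ≠ ∑ w, T.dist u₂ w) :
    T.subtreeTr r v u₁ h₁ ≠ T.subtreeTr r v u₂ h₂ := by
  classical
  intro heq
  apply htr
  set S := T.subtreeSet r v with hS
  -- the subtree transmission equals the sum of tree distances over S
  have key : ∀ (u : V) (hu : u ∈ S),
      T.subtreeTr r v u hu = ∑ w ∈ S.toFinset, T.dist u w := by
    intro u hu
    rw [SimpleGraph.subtreeTr]
    rw [show (∑ w : T.subtreeSet r v,
        (T.induce (T.subtreeSet r v)).dist ⟨u, hu⟩ w) =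
        ∑ w : T.subtreeSet r v, T.dist u (w : V) from
      Finset.sum_congr rfl fun w _ => SimpleGraph.aux_induced_dist_eq hT hu w.2]
    rw [← Finset.sum_set_coe]
  -- split the full sum over S and its complement
  have split : ∀ u : V, (∑ w, T.dist u w) =
      (∑ w ∈ S.toFinset, T.dist u w) + ∑ w ∈ S.toFinsetᶜ, T.dist u w := by
    intro u
    rw [Finset.sum_add_sum_compl]
  have hout : ∀ u : V, u ∈ S → T.dist u v = T.dist v u₁ →
      (∑ w ∈ S.toFinsetᶜ, T.dist u w) =
        ∑ w ∈ S.toFinsetᶜ, (T.dist v u₁ + T.dist v w) := by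
    intro u hu hdu
    refine Finset.sum_congr rfl fun w hwc => ?_
    have hwS : w ∉ S := by
      rw [Finset.mem_compl, Set.mem_toFinset] at hwc
      exact hwc
    rw [SimpleGraph.aux_dist_eq_add_of_not_mem hT hu hwS, hdu]
  have hd₁ : T.dist u₁ v = T.dist v u₁ := SimpleGraph.dist_comm ..
  have hd₂ : T.dist u₂ v = T.dist v u₁ := by rw [SimpleGraph.dist_comm, ← hd]
  rw [split u₁, split u₂, hout u₁ h₁ hd₁, hout u₂ h₂ hd₂, ← key u₁ h₁, ← key u₂ h₂, heq]
end

section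
/- Let T be a finite transmission irregular tree regarded as a rooted tree (with any choice of root r), let v be a vertex of T and T_v the subtree of T rooted at v. Then T_v is weakly transmission irregular: any two distinct vertices u₁, u₂ of T_v with d_{T_v}(v, u₁) = d_{T_v}(v, u₂) satisfy Tr_{T_v}(u₁) ≠ Tr_{T_v}(u₂). -/
open scoped Classical

theorem SimpleGraph.mem_subtreeSet_self {V : Type*} (T : SimpleGraph V) (r v : V) :
    v ∈ T.subtreeSet r v := fun p => p.1.end_mem_support

namespace SubtreeWTIAux

open SimpleGraph

variable {V : Type*} {T : SimpleGraph V} {r v u w : V}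

/-- If `u` is in the subtree rooted at `v` and `w` is not, then every walk from
`u` to `w` passes through `v`. -/
lemma mem_support_of_walk (hu : u ∈ T.subtreeSet r v) (hw : w ∉ T.subtreeSet r v)
    (p : T.Walk u w) : v ∈ p.support := by
  by_contra hvp
  rw [SimpleGraph.subtreeSet, Set.mem_setOf_eq, not_forall] at hw
  obtain ⟨q, hq⟩ := hw
  have hc : v ∉ (q.1.append p.reverse).support := by
    rw [Walk.mem_support_append_iff]
    push_neg
    exact ⟨hq, by simpa using hvp⟩
  exact hc (Walk.support_toPath_subset _ (hu ((q.1.append p.reverse).toPath)))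

/-- If `u` is in the subtree rooted at `v` and `w` is not, distances add up through `v`. -/
lemma dist_eq_add (hT : T.IsTree) (hu : u ∈ T.subtreeSet r v)
    (hw : w ∉ T.subtreeSet r v) : T.dist u w = T.dist u v + T.dist v w := by
  refine le_antisymm hT.isConnected.dist_triangle ?_
  obtain ⟨p, hp⟩ := (hT.isConnected u w).exists_walk_length_eq_dist
  have hv := mem_support_of_walk hu hw p
  calc T.dist u v + T.dist v w
      ≤ (p.takeUntil v hv).length + (p.dropUntil v hv).length :=
        Nat.add_le_add (SimpleGraph.dist_le _) (SimpleGraph.dist_le _)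
    _ = p.length := by rw [← Walk.length_append, Walk.take_spec]
    _ = T.dist u w := hp

/-- The support of a path between two vertices of the subtree lies in the subtree. -/
lemma support_mem (hu : u ∈ T.subtreeSet r v) (hw : w ∈ T.subtreeSet r v)
    {p : T.Walk u w} (hp : p.IsPath) {x : V} (hx : x ∈ p.support) :
    x ∈ T.subtreeSet r v := by
  by_contra hxS
  have h1 : v ∈ (p.takeUntil x hx).support := mem_support_of_walk hu hxS _
  have h2 : v ∈ (p.dropUntil x hx).support := by
    have := mem_support_of_walk hw hxS (p.dropUntil x hx).reverse
    simpa using this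
  have hvx : v ≠ x := fun h => hxS (h ▸ T.mem_subtreeSet_self r v)
  have h2' : v ∈ (p.dropUntil x hx).support.tail := by
    have := (p.dropUntil x hx).support_eq_cons
    rw [this] at h2
    rcases List.mem_cons.mp h2 with h | h
    · exact absurd h hvx
    · rw [this]; simpa using h
  have hnd := hp.support_nodup
  rw [← Walk.take_spec p hx, Walk.support_append, List.nodup_append] at hnd
  exact hnd.2.2 v h1 v h2' rfl

/-- Lifting a walk whose support lies in `S` to the induced subgraph on `S`. -/
lemma exists_lift {S : Set V} {a b : V} (p : T.Walk a b)
    (hp : ∀ x ∈ p.support, x ∈ S) :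
    ∃ q : (T.induce S).Walk ⟨a, hp _ p.start_mem_support⟩ ⟨b, hp _ p.end_mem_support⟩,
      q.length = p.length := by
  induction p with
  | nil => exact ⟨.nil, rfl⟩
  | @cons a c b h p ih =>
      obtain ⟨q, hq⟩ := ih (fun x hx => hp x (by simp [hx]))
      exact ⟨.cons (by exact h) q, by show q.length + 1 = _; rw [hq]; rfl⟩

/-- Within the subtree, distances computed in the induced subgraph agree with
distances in `T`. -/
lemma induce_dist_eq (hT : T.IsTree) (hu : u ∈ T.subtreeSet r v)
    (hw : w ∈ T.subtreeSet r v) :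
    (T.induce (T.subtreeSet r v)).dist ⟨u, hu⟩ ⟨w, hw⟩ = T.dist u w := by
  obtain ⟨p0, hp0⟩ := (hT.isConnected u w).exists_walk_length_eq_dist
  have hpl : p0.bypass.length = T.dist u w :=
    le_antisymm (hp0 ▸ p0.length_bypass_le) (SimpleGraph.dist_le _)
  have hsupp : ∀ x ∈ p0.bypass.support, x ∈ T.subtreeSet r v := fun x hx =>
    support_mem hu hw p0.bypass_isPath hx
  obtain ⟨q, hq⟩ := exists_lift p0.bypass hsupp
  refine le_antisymm ?_ ?_
  · calc (T.induce (T.subtreeSet r v)).dist ⟨u, hu⟩ ⟨w, hw⟩ ≤ q.length :=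
          SimpleGraph.dist_le q
      _ = T.dist u w := by rw [hq, hpl]
  · have hreach : (T.induce (T.subtreeSet r v)).Reachable ⟨u, hu⟩ ⟨w, hw⟩ := ⟨q⟩
    obtain ⟨q', hq'⟩ := hreach.exists_walk_length_eq_dist
    calc T.dist u w ≤ (q'.map (⟨Subtype.val, fun h => h⟩ :
          T.induce (T.subtreeSet r v) →g T)).length := SimpleGraph.dist_le _
      _ = (T.induce (T.subtreeSet r v)).dist ⟨u, hu⟩ ⟨w, hw⟩ := by
          rw [Walk.length_map, hq']

/-- The subtree transmission expressed via distances in `T`. -/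
lemma subtreeTr_eq [Fintype V] (hT : T.IsTree) (hu : u ∈ T.subtreeSet r v) :
    T.subtreeTr r v u hu = ∑ w ∈ (T.subtreeSet r v).toFinset, T.dist u w := by
  rw [SimpleGraph.subtreeTr, ← Finset.sum_set_coe (s := T.subtreeSet r v)
    (f := fun w => T.dist u w)]
  exact Finset.sum_congr rfl fun w _ => induce_dist_eq hT hu w.2

/-- Decomposing the transmission in `T` of a subtree vertex. -/
lemma tr_decomp [Fintype V] (hT : T.IsTree) (hu : u ∈ T.subtreeSet r v) :
    (∑ w, T.dist u w) = T.subtreeTr r v u hu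
      + ((T.subtreeSet r v).toFinsetᶜ.card * T.dist u v
        + ∑ w ∈ (T.subtreeSet r v).toFinsetᶜ, T.dist v w) := by
  rw [subtreeTr_eq hT hu, ← Finset.sum_add_sum_compl (T.subtreeSet r v).toFinset
    (fun w => T.dist u w)]
  congr 1
  rw [← Finset.sum_const_nat (m := T.dist u v) (fun x _ => rfl), ← Finset.sum_add_distrib]
  · refine Finset.sum_congr rfl fun w hw => ?_
    rw [Finset.mem_compl, Set.mem_toFinset] at hw
    exact dist_eq_add hT hu hw

end SubtreeWTIAux

/-- Let `T` be a finite transmission irregular tree rooted at any `r`,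
`v` a vertex of `T` and `T_v` the subtree rooted at `v`.  Then `T_v` is weakly
transmission irregular: any two distinct vertices `u₁, u₂` of `T_v` with
`d_{T_v}(v, u₁) = d_{T_v}(v, u₂)` satisfy `Tr_{T_v}(u₁) ≠ Tr_{T_v}(u₂)`. -/
theorem subtree_WTI_of_TI {V : Type*} [Fintype V]
    (T : SimpleGraph V) (hT : T.IsTree)
    (hTI : ∀ x y : V, (∑ w, T.dist x w) = (∑ w, T.dist y w) → x = y)
    (r v : V) (u₁ u₂ : V)
    (h₁ : u₁ ∈ T.subtreeSet r v) (h₂ : u₂ ∈ T.subtreeSet r v) (hne : u₁ ≠ u₂)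
    (hd : (T.induce (T.subtreeSet r v)).dist ⟨v, T.mem_subtreeSet_self r v⟩ ⟨u₁, h₁⟩ =
          (T.induce (T.subtreeSet r v)).dist ⟨v, T.mem_subtreeSet_self r v⟩ ⟨u₂, h₂⟩) :
    T.subtreeTr r v u₁ h₁ ≠ T.subtreeTr r v u₂ h₂ := by
  intro heq
  apply hne
  apply hTI
  have hdT : T.dist u₁ v = T.dist u₂ v := by
    have e1 := SubtreeWTIAux.induce_dist_eq hT (T.mem_subtreeSet_self r v) h₁
    have e2 := SubtreeWTIAux.induce_dist_eq hT (T.mem_subtreeSet_self r v) h₂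
    rw [e1, e2] at hd
    rw [SimpleGraph.dist_comm, hd, SimpleGraph.dist_comm]
  rw [SubtreeWTIAux.tr_decomp hT h₁, SubtreeWTIAux.tr_decomp hT h₂, heq, hdT]
end
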